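/- Haar–Kemperman property: let μ be a Borel probability measure on G, inner regular by compact sets and outer regular by open sets, such that for every compact K ⊆ G with μ(K) > 0 the map m_K : t ↦ μ(tK) is continuous at 1_G. Then for every μ-measurable set A with μ(A) > 0 there exists δ > 0 such that μ(tA ∩ A) > 0 for all t with ‖t‖ < δ; in particular B_δ ⊆ AA⁻¹, equivalently tA ∩ A ≠ ∅ whenever ‖t‖ < δ. -/

import Mathlib

open Set Topology TopologicalSpace MeasureTheory Filter Pointwise

/-- Haar–Kemperman property: if `μ` is a regular Borel probability measure on
`G` such that `t ↦ μ(tK)` is continuous at `1` for every compact `K` of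
positive measure, then for every `μ`-measurable `A` with `μ(A) > 0` there is
`δ > 0` with `μ(tA ∩ A) > 0` for `‖t‖ < δ`; in particular `B_δ ⊆ AA⁻¹`,
equivalently `tA ∩ A ≠ ∅` for `‖t‖ < δ`. -/
theorem stmt_12 {G : Type*} [Group G] [MetricSpace G] [IsTopologicalGroup G]
    [SeparableSpace G] [MeasurableSpace G] [BorelSpace G]
    (hd : ∀ x y z : G, dist (x * z) (y * z) = dist x y)
    (μ : Measure G) [IsProbabilityMeasure μ] [μ.InnerRegular] [μ.OuterRegular]
    (hcont : ∀ K : Set G, IsCompact K → 0 < μ K →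
      ContinuousAt (fun t : G => μ ((t * ·) '' K)) 1)
    (A : Set G) (hA : NullMeasurableSet A μ) (hμA : 0 < μ A) :
    ∃ δ > (0 : ℝ),
      (∀ t : G, dist (1 : G) t < δ → 0 < μ ((t * ·) '' A ∩ A)) ∧
      (∀ t : G, dist (1 : G) t < δ → t ∈ A * A⁻¹) ∧
      (∀ t : G, dist (1 : G) t < δ → ((t * ·) '' A ∩ A).Nonempty) := by
  -- pass to a measurable subset of A with the same measure
  obtain ⟨B, hBA, hBm, hBae⟩ := hA.exists_measurable_subset_ae_eq
  have hμB : 0 < μ B := by rwa [measure_congr hBae]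
  -- pick a compact K ⊆ B of positive measure
  obtain ⟨K, hKB, hKc, hKpos⟩ := hBm.exists_lt_isCompact hμB
  have hKne : μ K ≠ ⊤ := measure_ne_top μ K
  -- pick an open U ⊇ K with μ U < 2 μ K
  obtain ⟨U, hKU, hUo, hUlt⟩ := K.exists_isOpen_lt_add hKne (ne_of_gt hKpos)
  -- pick a neighborhood V of 1 with V * K ⊆ U
  obtain ⟨V, hV1, hVK⟩ := compact_open_separated_mul_left hKc hUo hKU
  -- continuity of t ↦ μ (t K) at 1
  have hf1 : μ ((((1 : G)) * ·) '' K) = μ K := by simp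
  have hlt : μ U - μ K < μ K := by
    rw [ENNReal.sub_lt_iff_lt_right hKne (measure_mono hKU)]; exact hUlt
  have hev : ∀ᶠ t in 𝓝 (1 : G), μ U - μ K < μ ((t * ·) '' K) := by
    exact (hcont K hKc hKpos).eventually (eventually_gt_nhds
      (show μ U - μ K < μ ((((1 : G)) * ·) '' K) by rw [hf1]; exact hlt))
  have hev2 : ∀ᶠ t in 𝓝 (1 : G), μ U - μ K < μ ((t * ·) '' K) ∧ t ∈ V :=
    hev.and hV1
  rw [Metric.eventually_nhds_iff] at hev2
  obtain ⟨δ, hδ, hδprop⟩ := hev2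
  have key : ∀ t : G, dist (1 : G) t < δ → 0 < μ ((t * ·) '' A ∩ A) := by
    intro t ht
    obtain ⟨h1, h2⟩ := hδprop (show dist t 1 < δ by rwa [dist_comm])
    have htKU : (t * ·) '' K ⊆ U := by
      refine subset_trans ?_ hVK
      rintro x ⟨k, hk, rfl⟩
      exact mul_mem_mul h2 hk
    have hsub : μ ((t * ·) '' K) ≤ μ ((t * ·) '' K ∩ K) + μ (U \ K) :=
      le_trans (measure_le_inter_add_diff μ _ K)
        (add_le_add_right (measure_mono (diff_subset_diff_left htKU)) _)
    have hUK : μ (U \ K) = μ U - μ K :=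
      measure_diff hKU hKc.measurableSet.nullMeasurableSet hKne
    have hposKK : 0 < μ ((t * ·) '' K ∩ K) := by
      by_contra h
      push_neg at h
      have h0 : μ ((t * ·) '' K ∩ K) = 0 := le_antisymm h (zero_le)
      rw [h0, zero_add, hUK] at hsub
      exact absurd hsub (not_le.mpr h1)
    refine lt_of_lt_of_le hposKK (measure_mono (inter_subset_inter ?_ (hKB.trans hBA)))
    exact image_mono (hKB.trans hBA)
  refine ⟨δ, hδ, key, ?_, ?_⟩
  · intro t ht
    obtain ⟨x, ⟨a, ha, rfl⟩, hx⟩ := nonempty_of_measure_ne_zero (ne_of_gt (key t ht))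
    have : t = (t * a) * a⁻¹ := by group
    rw [this]
    exact mul_mem_mul hx (Set.inv_mem_inv.mpr ha)
  · intro t ht
    exact nonempty_of_measure_ne_zero (ne_of_gt (key t ht))
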